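/- Let ζ ∈ (−1,1), k ∈ ℕ, and x ≥ 0. Then the series ∑_{n=k}^∞ binom(n,k) ζ^{n−k} (1−ζ)^{k+1} L_n(x) e^{−x/2} converges and its sum equals e^{−x(1+ζ)/(2(1−ζ))} L_k(x/(1−ζ)). -/

import Mathlib

/-- The Laguerre polynomial `L_n(x) = ∑_{k=0}^n (-1)^k (n choose k) x^k / k!`. -/
noncomputable def laguerre (n : ℕ) (x : ℝ) : ℝ :=
  ∑ k ∈ Finset.range (n + 1), (-1) ^ k * (n.choose k : ℝ) * x ^ k / (k.factorial : ℝ)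

open Finset

/-- Vandermonde in range form. -/
lemma vand_range (m p K : ℕ) :
    (m + p).choose K = ∑ u ∈ range (K + 1), m.choose u * p.choose (K - u) := by
  rw [Nat.add_choose_eq, Finset.Nat.sum_antidiagonal_eq_sum_range_succ_mk]

/-- subset-of-subset identity, unconditional. -/
lemma choose_mul_add (n b t : ℕ) :
    n.choose (b + t) * (b + t).choose b = n.choose b * (n - b).choose t := by
  rcases le_or_gt (b + t) n with h | h
  · have := Nat.choose_mul (n := n) (k := b + t) (s := b) (Nat.le_add_right _ _)
    simpa using this
  · rw [Nat.choose_eq_zero_of_lt h, zero_mul]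
    rcases le_or_gt b n with hb | hb
    · have : n - b < t := by omega
      rw [Nat.choose_eq_zero_of_lt this, mul_zero]
    · rw [Nat.choose_eq_zero_of_lt hb, zero_mul]

lemma aux1 (k j b : ℕ) :
    ∑ i ∈ range (k + 1), k.choose i * (j.choose i * i.choose b)
      = j.choose b * (k + j - b).choose j := by
  rcases le_or_gt b k with hbk | hbk
  · have hsub : Finset.Ico b (k + 1) ⊆ range (k + 1) := by
      intro i hi; simp only [mem_Ico] at hi; simp [hi.2]
    have h0 : ∀ i ∈ range (k + 1), i ∉ Finset.Ico b (k + 1) →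
        k.choose i * (j.choose i * i.choose b) = 0 := by
      intro i hi hni
      simp only [mem_range] at hi
      simp only [mem_Ico, not_and, not_lt] at hni
      have : i < b := by by_contra h; exact absurd hi (by omega)
      rw [Nat.choose_eq_zero_of_lt this, mul_zero, mul_zero]
    rw [← Finset.sum_subset hsub h0, Finset.sum_Ico_eq_sum_range]
    have hrange : k + 1 - b = (k - b) + 1 := by omega
    have hterm : ∀ t, k.choose (b + t) * (j.choose (b + t) * (b + t).choose b)
        = j.choose b * (k.choose (b + t) * (j - b).choose t) := by
      intro t
      rw [mul_comm (j.choose (b + t)) ((b + t).choose b)]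
      rw [mul_comm ((b+t).choose b) (j.choose (b+t))]  -- undo, fix below
      rw [choose_mul_add j b t]; ring
    calc ∑ t ∈ range (k + 1 - b), k.choose (b + t) * (j.choose (b + t) * (b + t).choose b)
        = ∑ t ∈ range (k + 1 - b), j.choose b * (k.choose (b + t) * (j - b).choose t) := by
          exact Finset.sum_congr rfl fun t _ => hterm t
      _ = j.choose b * ∑ t ∈ range (k + 1 - b), k.choose (b + t) * (j - b).choose t := by
          rw [Finset.mul_sum]
      _ = j.choose b * (k + j - b).choose j := by
          rcases le_or_gt b j with hbj | hbj
          · congr 1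
            rw [hrange, ← Finset.sum_range_reflect]
            have : ∀ t ∈ range (k - b + 1),
                k.choose (b + (k - b + 1 - 1 - t)) * (j - b).choose (k - b + 1 - 1 - t)
                  = k.choose t * (j - b).choose (k - b - t) := by
              intro t ht
              simp only [mem_range] at ht
              have h1 : k - b + 1 - 1 - t = k - b - t := by omega
              have h2 : b + (k - b - t) = k - t := by omega
              rw [h1, h2]
              congr 1
              have : k - (k - t) = t := by omega
              rw [← this, Nat.choose_symm (by omega)]
            rw [Finset.sum_congr rfl this, ← vand_range]
            have : k + (j - b) = k + j - b := by omega
            rw [this]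
            rw [← Nat.choose_symm (show j ≤ k + j - b by omega)]
            congr 1
            omega
          · rw [Nat.choose_eq_zero_of_lt hbj, zero_mul, zero_mul]
  · -- b > k : every term zero
    have h0 : ∀ i ∈ range (k + 1), k.choose i * (j.choose i * i.choose b) = 0 := by
      intro i hi
      simp only [mem_range] at hi
      rw [Nat.choose_eq_zero_of_lt (by omega : i < b), mul_zero, mul_zero]
    rw [Finset.sum_eq_zero h0]
    rcases le_or_gt b j with hbj | hbj
    · rw [Nat.choose_eq_zero_of_lt (by omega : k + j - b < j), mul_zero]
    · rw [Nat.choose_eq_zero_of_lt hbj, zero_mul]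

lemma aux2 (n k j : ℕ) :
    ∑ a ∈ range (k + j + 1), n.choose a * (j.choose (k + j - a) * a.choose j)
      = n.choose k * n.choose j := by
  have hsub : Finset.Ico j (k + j + 1) ⊆ range (k + j + 1) := by
    intro a ha; simp only [mem_Ico] at ha; simp [ha.2]
  have h0 : ∀ a ∈ range (k + j + 1), a ∉ Finset.Ico j (k + j + 1) →
      n.choose a * (j.choose (k + j - a) * a.choose j) = 0 := by
    intro a ha hna
    simp only [mem_range] at ha
    simp only [mem_Ico, not_and, not_lt] at hna
    have : a < j := by omega
    rw [Nat.choose_eq_zero_of_lt this, mul_zero, mul_zero]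
  rw [← Finset.sum_subset hsub h0, Finset.sum_Ico_eq_sum_range]
  have hr : k + j + 1 - j = k + 1 := by omega
  rw [hr]
  have hterm : ∀ t ∈ range (k + 1), n.choose (j + t) * (j.choose (k + j - (j + t)) * (j + t).choose j)
      = n.choose j * ((n - j).choose t * j.choose (k - t)) := by
    intro t ht
    simp only [mem_range] at ht
    have h1 : k + j - (j + t) = k - t := by omega
    rw [h1, mul_comm (j.choose (k - t)) ((j + t).choose j), ← mul_assoc, choose_mul_add n j t]
    ring
  rw [Finset.sum_congr rfl hterm, ← Finset.mul_sum, ← vand_range]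
  rcases le_or_gt j n with hjn | hjn
  · have : n - j + j = n := by omega
    rw [this]; ring
  · simp [Nat.choose_eq_zero_of_lt hjn]

/-- The key combinatorial identity. -/
theorem key_choose (n k j : ℕ) :
    n.choose k * n.choose j
      = ∑ i ∈ range (k + 1), k.choose i * j.choose i * (n + i).choose (k + j) := by
  symm
  have step1 : ∀ i, k.choose i * j.choose i * (n + i).choose (k + j)
      = ∑ a ∈ range (k + j + 1), n.choose a * (k.choose i * (j.choose i * i.choose (k + j - a))) := by
    intro i
    rw [vand_range n i (k + j), Finset.mul_sum]
    exact Finset.sum_congr rfl fun a _ => by ring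
  calc ∑ i ∈ range (k+1), k.choose i * j.choose i * (n + i).choose (k + j)
      = ∑ i ∈ range (k+1), ∑ a ∈ range (k + j + 1),
          n.choose a * (k.choose i * (j.choose i * i.choose (k + j - a))) := by
        exact Finset.sum_congr rfl fun i _ => step1 i
    _ = ∑ a ∈ range (k + j + 1), ∑ i ∈ range (k+1),
          n.choose a * (k.choose i * (j.choose i * i.choose (k + j - a))) := Finset.sum_comm
    _ = ∑ a ∈ range (k + j + 1), n.choose a *
          ∑ i ∈ range (k+1), k.choose i * (j.choose i * i.choose (k + j - a)) := by
        exact Finset.sum_congr rfl fun a _ => by rw [Finset.mul_sum]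
    _ = ∑ a ∈ range (k + j + 1), n.choose a *
          (j.choose (k + j - a) * (k + j - (k + j - a)).choose j) := by
        exact Finset.sum_congr rfl fun a _ => by rw [aux1]
    _ = ∑ a ∈ range (k + j + 1), n.choose a * (j.choose (k + j - a) * a.choose j) := by
        refine Finset.sum_congr rfl fun a ha => ?_
        simp only [mem_range] at ha
        have : k + j - (k + j - a) = a := by omega
        rw [this]
    _ = n.choose k * n.choose j := aux2 n k j
open Finset

lemma hasSum_exp_real (x : ℝ) :
    HasSum (fun n : ℕ => x ^ n / n.factorial) (Real.exp x) := by
  rw [Real.exp_eq_exp_ℝ]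
  exact NormedSpace.expSeries_div_hasSum_exp x

lemma hasSum_shifted (r : ℝ) (hr : |r| < 1) (k i j : ℕ) (hij : i ≤ j) :
    HasSum (fun m : ℕ => ((m + k + i).choose (k + j) : ℝ) * r ^ m)
      (r ^ (j - i) / (1 - r) ^ (k + j + 1)) := by
  have hr' : ‖r‖ < 1 := by simpa [Real.norm_eq_abs] using hr
  have base := hasSum_choose_mul_geometric_of_norm_lt_one (𝕜 := ℝ) (k + j) hr'
  have h2 := base.mul_left (r ^ (j - i))
  set f : ℕ → ℝ := fun m => ((m + k + i).choose (k + j) : ℝ) * r ^ m with hf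
  have hfun : (fun n : ℕ => r ^ (j - i) * (((n + (k + j)).choose (k + j) : ℝ) * r ^ n))
      = fun n => f (n + (j - i)) := by
    funext n
    have h1 : n + (j - i) + k + i = n + (k + j) := by omega
    simp only [hf]
    rw [h1, pow_add]
    ring
  rw [hfun] at h2
  have h3 := (hasSum_nat_add_iff (f := f) (j - i)).mp h2
  have h4 : ∑ t ∈ range (j - i), f t = 0 := by
    apply Finset.sum_eq_zero
    intro t ht
    simp only [mem_range] at ht
    have : t + k + i < k + j := by omega
    simp [hf, Nat.choose_eq_zero_of_lt this]
  rw [h4, add_zero] at h3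
  have : r ^ (j - i) * (1 / (1 - r) ^ (k + j + 1)) = r ^ (j - i) / (1 - r) ^ (k + j + 1) := by
    ring
  rwa [this] at h3

lemma hasSum_choose_sq (r : ℝ) (hr : |r| < 1) (k j : ℕ) :
    HasSum (fun m : ℕ => ((m + k).choose k : ℝ) * ((m + k).choose j) * r ^ m)
      (∑ i ∈ range (k + 1),
        (k.choose i : ℝ) * j.choose i * (r ^ (j - i) / (1 - r) ^ (k + j + 1))) := by
  have hterms : ∀ i ∈ range (k + 1),
      HasSum (fun m : ℕ => ((k.choose i : ℝ) * j.choose i) * (((m + k + i).choose (k + j) : ℝ) * r ^ m))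
        ((k.choose i : ℝ) * j.choose i * (r ^ (j - i) / (1 - r) ^ (k + j + 1))) := by
    intro i _
    rcases le_or_gt i j with hij | hij
    · exact (hasSum_shifted r hr k i j hij).mul_left _
    · have hz : (j.choose i : ℝ) = 0 := by
        simp [Nat.choose_eq_zero_of_lt hij]
      simpa [hz] using (hasSum_zero : HasSum (fun _ : ℕ => (0:ℝ)) 0)
  have H := hasSum_sum hterms
  have heq : (fun m : ℕ => ∑ i ∈ range (k + 1),
      ((k.choose i : ℝ) * j.choose i) * (((m + k + i).choose (k + j) : ℝ) * r ^ m))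
      = fun m : ℕ => ((m + k).choose k : ℝ) * ((m + k).choose j) * r ^ m := by
    funext m
    have hkey := key_choose (m + k) k j
    have : ((m + k).choose k : ℝ) * ((m + k).choose j)
        = ∑ i ∈ range (k + 1), (k.choose i : ℝ) * j.choose i * ((m + k + i).choose (k + j)) := by
      exact_mod_cast congrArg (Nat.cast : ℕ → ℝ) hkey
    rw [this, Finset.sum_mul]
    exact Finset.sum_congr rfl fun i _ => by ring
  rwa [heq] at H

lemma choose_le_two_pow' (n k : ℕ) (h : k ≤ n) : n.choose k ≤ 2 ^ n := by
  calc n.choose k ≤ ∑ i ∈ range (n + 1), n.choose i :=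
        Finset.single_le_sum (fun i _ => Nat.zero_le _) (by simp [Nat.lt_succ, h])
    _ = 2 ^ n := Nat.sum_range_choose n

lemma summable_poly_exp (k : ℕ) (y : ℝ) (hy : 0 ≤ y) :
    Summable (fun j : ℕ => ((j : ℝ) + 1) ^ k * y ^ j / j.factorial) := by
  have hbound : ∀ j : ℕ, ((j : ℝ) + 1) ^ k * y ^ j / j.factorial
      ≤ (k.factorial * 2 ^ k : ℝ) * ((2 * y) ^ j / j.factorial) := by
    intro j
    have h1 : ((j : ℕ) + 1) ^ k ≤ k.factorial * (j + k).choose k := by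
      calc (j + 1) ^ k = (j + k + 1 - k) ^ k := by congr 1; omega
        _ ≤ (j + k).descFactorial k := Nat.pow_sub_le_descFactorial _ _
        _ = k.factorial * (j + k).choose k := Nat.descFactorial_eq_factorial_mul_choose _ _
    have h2 : (j + k).choose k ≤ 2 ^ (j + k) := choose_le_two_pow' _ _ (by omega)
    have h3 : ((j : ℝ) + 1) ^ k ≤ (k.factorial : ℝ) * 2 ^ (j + k) := by
      have : ((j + 1 : ℕ) : ℝ) ^ k ≤ ((k.factorial * 2 ^ (j + k) : ℕ) : ℝ) := by
        exact_mod_cast le_trans h1 (Nat.mul_le_mul_left _ h2)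
      push_cast at this
      convert this using 2 <;> push_cast <;> ring
    have hrw : (k.factorial * 2 ^ k : ℝ) * ((2 * y) ^ j / j.factorial)
        = ((k.factorial : ℝ) * 2 ^ (j + k)) * y ^ j / j.factorial := by
      rw [mul_pow, pow_add]; ring
    rw [hrw]
    gcongr
  apply Summable.of_nonneg_of_le (fun j => by positivity) hbound
  exact (Real.summable_pow_div_factorial (2 * y)).mul_left _

lemma summable_absF (ζ x : ℝ) (hζ : |ζ| < 1) (hx : 0 ≤ x) (k : ℕ) :
    Summable (fun p : ℕ × ℕ => ((p.2 + k).choose k : ℝ) * ((p.2 + k).choose p.1)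
      * |ζ| ^ p.2 * (x ^ p.1 / p.1.factorial)) := by
  set q := |ζ| with hqdef
  have hq0 : 0 ≤ q := abs_nonneg _
  have hq1 : q < 1 := hζ
  have hq1' : 0 < 1 - q := by linarith
  have hqabs : |q| < 1 := by rwa [abs_of_nonneg hq0]
  rw [summable_prod_of_nonneg (fun p => by positivity)]
  constructor
  · intro j
    exact ((hasSum_choose_sq q hqabs k j).mul_right (x ^ j / j.factorial)).summable
  · have htsum : ∀ j : ℕ, ∑' m, ((m + k).choose k : ℝ) * ((m + k).choose j)
        * q ^ m * (x ^ j / j.factorial)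
        = (∑ i ∈ range (k + 1),
            (k.choose i : ℝ) * j.choose i * (q ^ (j - i) / (1 - q) ^ (k + j + 1)))
          * (x ^ j / j.factorial) := by
      intro j
      exact ((hasSum_choose_sq q hqabs k j).mul_right (x ^ j / j.factorial)).tsum_eq
    apply Summable.of_nonneg_of_le (fun j => tsum_nonneg (fun m => by positivity))
      (f := fun j : ℕ => ((k : ℝ) + 1) * 2 ^ k * (1 / (1 - q)) ^ (k + 1)
        * (((j : ℝ) + 1) ^ k * (x / (1 - q)) ^ j / j.factorial))
    · intro j
      rw [htsum j]
      have hbnd : ∀ i ∈ range (k + 1),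
          (k.choose i : ℝ) * j.choose i * (q ^ (j - i) / (1 - q) ^ (k + j + 1))
            ≤ 2 ^ k * ((j : ℝ) + 1) ^ k * (1 / (1 - q) ^ (k + j + 1)) := by
        intro i hi
        simp only [mem_range] at hi
        have h1 : (k.choose i : ℝ) ≤ 2 ^ k := by
          exact_mod_cast choose_le_two_pow' k i (by omega)
        have h2 : (j.choose i : ℝ) ≤ ((j : ℝ) + 1) ^ k := by
          have : j.choose i ≤ (j + 1) ^ k := by
            calc j.choose i ≤ j ^ i := Nat.choose_le_pow _ _
              _ ≤ (j + 1) ^ i := Nat.pow_le_pow_left (by omega) _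
              _ ≤ (j + 1) ^ k := Nat.pow_le_pow_right (by omega) (by omega)
          exact_mod_cast this
        have h3 : q ^ (j - i) ≤ 1 := pow_le_one₀ hq0 (by linarith)
        calc (k.choose i : ℝ) * j.choose i * (q ^ (j - i) / (1 - q) ^ (k + j + 1))
            ≤ 2 ^ k * (((j:ℝ) + 1) ^ k) * (1 / (1 - q) ^ (k + j + 1)) := by
              gcongr
          _ = 2 ^ k * ((j : ℝ) + 1) ^ k * (1 / (1 - q) ^ (k + j + 1)) := by ring
      calc (∑ i ∈ range (k + 1),
            (k.choose i : ℝ) * j.choose i * (q ^ (j - i) / (1 - q) ^ (k + j + 1)))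
          * (x ^ j / j.factorial)
          ≤ (∑ _i ∈ range (k + 1),
              2 ^ k * ((j : ℝ) + 1) ^ k * (1 / (1 - q) ^ (k + j + 1)))
            * (x ^ j / j.factorial) := by
            apply mul_le_mul_of_nonneg_right (Finset.sum_le_sum hbnd) (by positivity)
        _ = ((k : ℝ) + 1) * 2 ^ k * (1 / (1 - q)) ^ (k + 1)
            * (((j : ℝ) + 1) ^ k * (x / (1 - q)) ^ j / j.factorial) := by
            rw [Finset.sum_const, Finset.card_range]
            have hne : (1 - q) ≠ 0 := ne_of_gt hq1'
            simp only [nsmul_eq_mul, div_pow, one_pow]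
            push_cast
            field_simp
            ring
    · apply Summable.mul_left
      exact summable_poly_exp k (x / (1 - q)) (by positivity)

lemma hasSum_u (ζ x : ℝ) (hζ : (1 : ℝ) - ζ ≠ 0) (k i : ℕ) :
    HasSum (fun j : ℕ => (k.choose i : ℝ) * (j.choose i) * (ζ ^ (j - i) / (1 - ζ) ^ (k + j + 1))
        * ((-1) ^ j * x ^ j / j.factorial))
      ((k.choose i : ℝ) * ((-1) ^ i * x ^ i) / (i.factorial * (1 - ζ) ^ (k + i + 1))
        * Real.exp (-(x * ζ) / (1 - ζ))) := by
  set w : ℝ := -(x * ζ) / (1 - ζ) with hwdef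
  set c : ℝ := (k.choose i : ℝ) * ((-1) ^ i * x ^ i) / (i.factorial * (1 - ζ) ^ (k + i + 1))
    with hcdef
  set u : ℕ → ℝ := fun j => (k.choose i : ℝ) * (j.choose i) * (ζ ^ (j - i) / (1 - ζ) ^ (k + j + 1))
      * ((-1) ^ j * x ^ j / j.factorial) with hudef
  have base := (hasSum_exp_real w).mul_left c
  have hfun : (fun a : ℕ => c * (w ^ a / a.factorial)) = fun a => u (a + i) := by
    funext a
    have hsub : a + i - i = a := by omega
    have hch : (((a + i).choose i : ℝ)) = ((a + i).factorial : ℝ)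
        / (i.factorial * a.factorial) := by
      have h := Nat.choose_mul_factorial_mul_factorial (show i ≤ a + i by omega)
      have h' : ((a + i).choose i : ℝ) * i.factorial * (a + i - i).factorial
          = ((a + i).factorial : ℝ) := by exact_mod_cast congrArg (Nat.cast : ℕ → ℝ) h
      rw [hsub] at h'
      field_simp at h' ⊢
      linarith [h']
    have hw : w ^ a = (-1) ^ a * (x ^ a * ζ ^ a) / (1 - ζ) ^ a := by
      rw [hwdef, div_pow, neg_pow (x * ζ), mul_pow]
      try ring
    simp only [hudef, hcdef, hsub, hch, hw]
    have hpow : (1 - ζ) ^ (k + (a + i) + 1) = (1 - ζ) ^ (k + i + 1) * (1 - ζ) ^ a := by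
      rw [← pow_add]; congr 1; omega
    have hx : x ^ (a + i) = x ^ a * x ^ i := pow_add x a i ▸ by ring
    have hneg : ((-1 : ℝ)) ^ (a + i) = (-1) ^ a * (-1) ^ i := pow_add (-1 : ℝ) a i
    rw [hpow, hx, hneg]
    have hfi : (i.factorial : ℝ) ≠ 0 := by positivity
    have hfa : (a.factorial : ℝ) ≠ 0 := by positivity
    have hfai : (((a + i).factorial : ℕ) : ℝ) ≠ 0 := by positivity
    field_simp
    try ring
  rw [hfun] at base
  have h3 := (hasSum_nat_add_iff (f := u) i).mp base
  have h4 : ∑ t ∈ range i, u t = 0 := by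
    apply Finset.sum_eq_zero
    intro t ht
    simp only [mem_range] at ht
    simp [hudef, Nat.choose_eq_zero_of_lt ht]
  rw [h4, add_zero] at h3
  exact h3

lemma hasSum_T (ζ x : ℝ) (hζ : (1 : ℝ) - ζ ≠ 0) (k : ℕ) :
    HasSum (fun j : ℕ => (∑ i ∈ range (k + 1),
        (k.choose i : ℝ) * (j.choose i) * (ζ ^ (j - i) / (1 - ζ) ^ (k + j + 1)))
        * ((-1) ^ j * x ^ j / j.factorial))
      (Real.exp (-(x * ζ) / (1 - ζ)) * laguerre k (x / (1 - ζ)) / (1 - ζ) ^ (k + 1)) := by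
  have H := hasSum_sum (s := range (k + 1))
    (f := fun i j => (k.choose i : ℝ) * (j.choose i) * (ζ ^ (j - i) / (1 - ζ) ^ (k + j + 1))
        * ((-1) ^ j * x ^ j / j.factorial))
    (a := fun i => (k.choose i : ℝ) * ((-1) ^ i * x ^ i) / (i.factorial * (1 - ζ) ^ (k + i + 1))
        * Real.exp (-(x * ζ) / (1 - ζ)))
    (fun i _ => hasSum_u ζ x hζ k i)
  have heq : (fun j : ℕ => ∑ i ∈ range (k + 1),
      (k.choose i : ℝ) * (j.choose i) * (ζ ^ (j - i) / (1 - ζ) ^ (k + j + 1))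
        * ((-1) ^ j * x ^ j / j.factorial))
      = fun j : ℕ => (∑ i ∈ range (k + 1),
        (k.choose i : ℝ) * (j.choose i) * (ζ ^ (j - i) / (1 - ζ) ^ (k + j + 1)))
        * ((-1) ^ j * x ^ j / j.factorial) := by
    funext j
    rw [Finset.sum_mul]
  rw [heq] at H
  have hsum : ∑ i ∈ range (k + 1),
      (k.choose i : ℝ) * ((-1) ^ i * x ^ i) / (i.factorial * (1 - ζ) ^ (k + i + 1))
        * Real.exp (-(x * ζ) / (1 - ζ))
      = Real.exp (-(x * ζ) / (1 - ζ)) * laguerre k (x / (1 - ζ)) / (1 - ζ) ^ (k + 1) := by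
    rw [laguerre, Finset.mul_sum, Finset.sum_div]
    refine Finset.sum_congr rfl fun i _ => ?_
    rw [div_pow]
    have hfi : (i.factorial : ℝ) ≠ 0 := by positivity
    field_simp
    ring
  rwa [hsum] at H

/-- Erdélyi's first multiplication theorem in summed form: for `ζ ∈ (−1,1)`, `k ∈ ℕ`,
`x ≥ 0`, the series `∑_{n=k}^∞ binom(n,k) ζ^{n−k} (1−ζ)^{k+1} L_n(x) e^{−x/2}`
(indexed by `n = m + k`, `m ∈ ℕ`) converges with sum
`e^{−x(1+ζ)/(2(1−ζ))} L_k(x/(1−ζ))`. -/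
theorem hasSum_laguerre_multiplication (ζ : ℝ) (h₁ : -1 < ζ) (h₂ : ζ < 1) (k : ℕ)
    (x : ℝ) (hx : 0 ≤ x) :
    HasSum
      (fun m : ℕ =>
        ((m + k).choose k : ℝ) * ζ ^ m * (1 - ζ) ^ (k + 1) * laguerre (m + k) x *
          Real.exp (-x / 2))
      (Real.exp (-(x * (1 + ζ)) / (2 * (1 - ζ))) * laguerre k (x / (1 - ζ))) := by
  have hζabs : |ζ| < 1 := abs_lt.mpr ⟨h₁, h₂⟩
  have hs : (0:ℝ) < 1 - ζ := by linarith
  have hsne : (1:ℝ) - ζ ≠ 0 := ne_of_gt hs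
  set F : ℕ × ℕ → ℝ := fun p =>
    ((p.2 + k).choose k : ℝ) * ((p.2 + k).choose p.1) * ζ ^ p.2
      * ((-1) ^ p.1 * x ^ p.1 / p.1.factorial) with hFdef
  -- summability
  have hFsummable : Summable F := by
    apply Summable.of_norm_bounded (summable_absF ζ x hζabs hx k)
    intro p
    simp only [hFdef, Real.norm_eq_abs]
    simp only [abs_mul, abs_div, abs_pow, abs_neg, abs_one, one_pow, one_mul,
      Nat.abs_cast, abs_abs]
    rw [abs_of_nonneg hx]
  have hFhas : HasSum F (∑' p, F p) := hFsummable.hasSum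
  -- j-fiberwise
  have hjfiber : ∀ j : ℕ, HasSum (fun m => F (j, m))
      ((∑ i ∈ range (k + 1),
        (k.choose i : ℝ) * (j.choose i) * (ζ ^ (j - i) / (1 - ζ) ^ (k + j + 1)))
        * ((-1) ^ j * x ^ j / j.factorial)) := by
    intro j
    exact (hasSum_choose_sq ζ hζabs k j).mul_right _
  have hT := hFhas.prod_fiberwise hjfiber
  have hT' := hasSum_T ζ x hsne k
  have htsum : ∑' p, F p
      = Real.exp (-(x * ζ) / (1 - ζ)) * laguerre k (x / (1 - ζ)) / (1 - ζ) ^ (k + 1) :=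
    hT.unique hT'
  -- m-fiberwise
  have hswap : HasSum (fun p : ℕ × ℕ => F (p.2, p.1)) (∑' p, F p) := by
    have := (Equiv.prodComm ℕ ℕ).hasSum_iff (f := F) (a := ∑' p, F p)
    exact this.mpr hFhas
  have hmfiber : ∀ m : ℕ, HasSum (fun j => F (j, m))
      (((m + k).choose k : ℝ) * ζ ^ m * laguerre (m + k) x) := by
    intro m
    have hzero : ∀ j ∉ range (m + k + 1), F (j, m) = 0 := by
      intro j hj
      simp only [mem_range] at hj
      have : m + k < j := by omega
      simp [hFdef, Nat.choose_eq_zero_of_lt this]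
    have := hasSum_sum_of_ne_finset_zero (L := SummationFilter.unconditional ℕ) hzero
    have heq : ∑ j ∈ range (m + k + 1), F (j, m)
        = ((m + k).choose k : ℝ) * ζ ^ m * laguerre (m + k) x := by
      rw [laguerre, Finset.mul_sum]
      exact Finset.sum_congr rfl fun j _ => by simp only [hFdef]; ring
    rwa [heq] at this
  have hmain : HasSum (fun m : ℕ => ((m + k).choose k : ℝ) * ζ ^ m * laguerre (m + k) x)
      (Real.exp (-(x * ζ) / (1 - ζ)) * laguerre k (x / (1 - ζ)) / (1 - ζ) ^ (k + 1)) := by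
    rw [← htsum]
    exact hswap.prod_fiberwise hmfiber
  -- multiply by the constant
  have hfinal := hmain.mul_right ((1 - ζ) ^ (k + 1) * Real.exp (-x / 2))
  have hfuneq : (fun m : ℕ => ((m + k).choose k : ℝ) * ζ ^ m * laguerre (m + k) x
      * ((1 - ζ) ^ (k + 1) * Real.exp (-x / 2)))
      = fun m : ℕ => ((m + k).choose k : ℝ) * ζ ^ m * (1 - ζ) ^ (k + 1) * laguerre (m + k) x *
          Real.exp (-x / 2) := by
    funext m; ring
  rw [hfuneq] at hfinal
  have hsumeq : Real.exp (-(x * ζ) / (1 - ζ)) * laguerre k (x / (1 - ζ)) / (1 - ζ) ^ (k + 1)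
      * ((1 - ζ) ^ (k + 1) * Real.exp (-x / 2))
      = Real.exp (-(x * (1 + ζ)) / (2 * (1 - ζ))) * laguerre k (x / (1 - ζ)) := by
    have hexp : Real.exp (-(x * ζ) / (1 - ζ)) * Real.exp (-x / 2)
        = Real.exp (-(x * (1 + ζ)) / (2 * (1 - ζ))) := by
      rw [← Real.exp_add]
      congr 1
      field_simp
      ring
    have hpne : ((1:ℝ) - ζ) ^ (k + 1) ≠ 0 := pow_ne_zero _ hsne
    rw [← hexp, div_mul_eq_mul_div, div_eq_iff hpne]
    ring
  rwa [hsumeq] at hfinal
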